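/- For every integer g ≥ 5, there exists a (2,2,g)-graph with exactly ⌈g/2⌉·⌊3g/2⌋ vertices; consequently this number equals 3g²/4 when g is even and (3g² + 2g − 1)/4 when g is odd. -/

import Mathlib

/-- A mixed graph: a set of undirected edges (a symmetric irreflexive relation)
together with a set of directed arcs (an irreflexive relation), with no loops.
Since edges and arcs are given by relations, there are no repeated edges or arcs. -/
structure MixedGraph (V : Type*) where
  Edge : V → V → Prop
  Arc : V → V → Prop
  edge_symm : ∀ {u v}, Edge u v → Edge v u
  edge_irrefl : ∀ v, ¬ Edge v v
  arc_irrefl : ∀ v, ¬ Arc v v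

/-- A cycle of length `len ≥ 1` in a mixed graph: a cyclic sequence of vertices
`vert : ZMod len → V` where each consecutive pair `(vert i, vert (i+1))` is joined
either by an arc from `vert i` to `vert (i+1)` (when `useArc i = true`) or by an
undirected edge (when `useArc i = false`), and no edge or arc is used more than once. -/
structure MixedCycle {V : Type*} (G : MixedGraph V) where
  len : ℕ
  len_pos : 0 < len
  vert : ZMod len → V
  useArc : ZMod len → Bool
  step_arc : ∀ i, useArc i = true → G.Arc (vert i) (vert (i + 1))
  step_edge : ∀ i, useArc i = false → G.Edge (vert i) (vert (i + 1))
  arc_once : ∀ i j, useArc i = true → useArc j = true →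
    vert i = vert j → vert (i + 1) = vert (j + 1) → i = j
  edge_once : ∀ i j, useArc i = false → useArc j = false →
    ((vert i = vert j ∧ vert (i + 1) = vert (j + 1)) ∨
      (vert i = vert (j + 1) ∧ vert (i + 1) = vert j)) → i = j

/-- A mixed graph has girth `g` if it has a cycle of length `g` and no shorter cycle. -/
def MixedGraph.HasGirth {V : Type*} (G : MixedGraph V) (g : ℕ) : Prop :=
  (∃ c : MixedCycle G, c.len = g) ∧ ∀ c : MixedCycle G, g ≤ c.len

/-- An `(r,z,g)`-graph: every vertex is incident with exactly `r` undirected edges,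
every vertex has out-degree exactly `z`, and the girth is `g`. -/
def IsMixedRZG {V : Type*} (G : MixedGraph V) (r z g : ℕ) : Prop :=
  (∀ v, Nat.card {u | G.Edge v u} = r) ∧
  (∀ v, Nat.card {u | G.Arc v u} = z) ∧
  G.HasGirth g

set_option maxHeartbeats 1000000

lemma natCast_inj' {m x y : ℕ} (hx : x < m) (hy : y < m) (h : ((x : ℕ) : ZMod m) = (y : ℕ)) :
    x = y := by
  haveI : NeZero m := ⟨by omega⟩
  have := congrArg ZMod.val h
  rwa [ZMod.val_cast_of_lt hx, ZMod.val_cast_of_lt hy] at this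

lemma nsmul_pair {M N : Type*} [AddMonoid M] [AddMonoid N] (p : ℕ) (x : M) (y : N) :
    p • ((x, y) : M × N) = (p • x, p • y) := by
  induction p with
  | zero => simp; rfl
  | succ k ih => simp [succ_nsmul, ih, Prod.add_def]

def cayley {A : Type} [AddCommGroup A] (u α β : A)
    (hu : u ≠ 0) (hα : α ≠ 0) (hβ : β ≠ 0) : MixedGraph A where
  Edge x y := y = x + u ∨ x = y + u
  Arc x y := y = x + α ∨ y = x + β
  edge_symm h := h.symm
  edge_irrefl v h := by
    rcases h with h | h <;> exact hu (by simpa using h.symm)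
  arc_irrefl v h := by
    rcases h with h | h
    · exact hα (by simpa using h.symm)
    · exact hβ (by simpa using h.symm)

lemma cayley_edge_card {A : Type} [AddCommGroup A] (u α β : A)
    (hu : u ≠ 0) (hα : α ≠ 0) (hβ : β ≠ 0) (h2u : u ≠ -u) (v : A) :
    Nat.card {w | (cayley u α β hu hα hβ).Edge v w} = 2 := by
  have hset : {w | (cayley u α β hu hα hβ).Edge v w} = {v + u, v - u} := by
    ext w
    simp only [cayley, Set.mem_setOf_eq, Set.mem_insert_iff, Set.mem_singleton_iff]
    constructor
    · rintro (h | h)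
      · exact Or.inl h
      · right; rw [h]; abel
    · rintro (h | h)
      · exact Or.inl h
      · right; rw [h]; abel
  rw [hset, Nat.card_coe_set_eq, Set.ncard_pair]
  intro h
  apply h2u
  have := add_left_cancel (a := v) (by rw [h]; abel : v + u = v + -u)
  exact this

lemma cayley_arc_card {A : Type} [AddCommGroup A] (u α β : A)
    (hu : u ≠ 0) (hα : α ≠ 0) (hβ : β ≠ 0) (hαβ : α ≠ β) (v : A) :
    Nat.card {w | (cayley u α β hu hα hβ).Arc v w} = 2 := by
  have hset : {w | (cayley u α β hu hα hβ).Arc v w} = {v + α, v + β} := by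
    ext w
    simp only [cayley, Set.mem_setOf_eq, Set.mem_insert_iff, Set.mem_singleton_iff]
  rw [hset, Nat.card_coe_set_eq, Set.ncard_pair]
  intro h
  exact hαβ (add_left_cancel h)

lemma mk_cycle {V : Type} {G : MixedGraph V} {g : ℕ} (hg : 3 ≤ g)
    (w : ℕ → V) (uA : ℕ → Bool) (hclose : w g = w 0)
    (ha : ∀ i < g, uA i = true → G.Arc (w i) (w (i + 1)))
    (he : ∀ i < g, uA i = false → G.Edge (w i) (w (i + 1)))
    (hinj : ∀ i < g, ∀ j < g, w i = w j → i = j) :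
    ∃ c : MixedCycle G, c.len = g := by
  haveI : NeZero g := ⟨by omega⟩
  haveI : Fact (1 < g) := ⟨by omega⟩
  have hsucc : ∀ i : ZMod g, w ((i + 1 : ZMod g)).val = w (i.val + 1) := by
    intro i
    rw [ZMod.val_add, ZMod.val_one]
    rcases Nat.lt_or_ge (i.val + 1) g with h | h
    · rw [Nat.mod_eq_of_lt h]
    · have hv : i.val < g := ZMod.val_lt i
      have : i.val + 1 = g := by omega
      rw [this, Nat.mod_self, hclose]
  have vinj : ∀ i j : ZMod g, w i.val = w j.val → i = j := by
    intro i j h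
    exact ZMod.val_injective g (hinj i.val (ZMod.val_lt i) j.val (ZMod.val_lt j) h)
  refine ⟨⟨g, by omega, fun i => w i.val, fun i => uA i.val, ?_, ?_, ?_, ?_⟩, rfl⟩
  · intro i h
    show G.Arc (w i.val) (w (i + 1).val)
    rw [hsucc i]; exact ha i.val (ZMod.val_lt i) h
  · intro i h
    show G.Edge (w i.val) (w (i + 1).val)
    rw [hsucc i]; exact he i.val (ZMod.val_lt i) h
  · intro i j _ _ h _; exact vinj i j h
  · intro i j _ _ h
    rcases h with ⟨h1, _⟩ | ⟨h1, h2⟩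
    · exact vinj i j h1
    · have e1 : i = j + 1 := vinj _ _ h1
      have e2 : i + 1 = j := vinj _ _ h2
      exfalso
      rw [← e2, add_assoc] at e1
      have h0 := left_eq_add.mp e1
      have h2 : ((2 : ℕ) : ZMod g) = 0 := by exact_mod_cast h0
      rw [ZMod.natCast_eq_zero_iff] at h2
      have := Nat.le_of_dvd (by norm_num) h2
      omega

lemma girth_lb {A : Type} [AddCommGroup A] [Fintype A] [DecidableEq A]
    {u α β : A} (hu : u ≠ 0) (hα : α ≠ 0) (hβ : β ≠ 0)
    (h2u : u ≠ -u) (hαβ : α ≠ β) {g : ℕ}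
    (hord : ∀ m : ℕ, 1 ≤ m → m < g → m • u ≠ 0)
    (H1 : ∀ p q e1 e2 : ℕ, 1 ≤ p + q → p + q + e1 + e2 < g →
      p • α + q • β + e1 • u - e2 • u ≠ 0)
    (c : MixedCycle (cayley u α β hu hα hβ)) : g ≤ c.len := by
  by_contra hlt
  push_neg at hlt
  have hpos0 := c.len_pos
  haveI : NeZero c.len := ⟨c.len_pos.ne'⟩
  set n := c.len with hn
  -- rule out n = 1
  have hn2 : 2 ≤ n := by
    rcases Nat.lt_or_ge n 2 with h | h
    · exfalso
      have h1 : n = 1 := by omega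
      have hsub : (0 : ZMod n) + 1 = 0 := by
        have : Subsingleton (ZMod n) := by rw [h1]; infer_instance
        exact Subsingleton.elim _ _
      cases hb : c.useArc 0 with
      | true =>
        have := c.step_arc 0 hb
        rw [hsub] at this
        exact (cayley u α β hu hα hβ).arc_irrefl _ this
      | false =>
        have := c.step_edge 0 hb
        rw [hsub] at this
        exact (cayley u α β hu hα hβ).edge_irrefl _ this
    · exact h
  set d : ZMod n → A := fun i => c.vert (i + 1) - c.vert i with hd
  have hdspec : ∀ i, d i = c.vert (i + 1) - c.vert i := fun i => rfl
  have hclassA : ∀ i, c.useArc i = true → (d i = α ∨ d i = β) := by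
    intro i h
    rcases c.step_arc i h with h' | h'
    · left; rw [hdspec, h']; abel
    · right; rw [hdspec, h']; abel
  have hclassE : ∀ i, c.useArc i = false → (d i = u ∨ d i = -u) := by
    intro i h
    rcases c.step_edge i h with h' | h'
    · left; rw [hdspec, h']; abel
    · right; rw [hdspec, h']; abel
  have hsum : ∑ i : ZMod n, d i = 0 := by
    have hre : ∑ i : ZMod n, c.vert (i + 1) = ∑ i : ZMod n, c.vert i :=
      Fintype.sum_equiv (Equiv.addRight (1 : ZMod n)) _ _ (fun i => rfl)
    calc ∑ i : ZMod n, d i = ∑ i : ZMod n, (c.vert (i + 1) - c.vert i) :=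
          Finset.sum_congr rfl (fun i _ => hdspec i)
      _ = 0 := by rw [Finset.sum_sub_distrib, hre, sub_self]
  classical
  set P := Finset.univ.filter (fun i : ZMod n => c.useArc i = true ∧ d i = α) with hP
  set Q := Finset.univ.filter (fun i : ZMod n => c.useArc i = true ∧ ¬(d i = α)) with hQ
  set E1 := Finset.univ.filter (fun i : ZMod n => ¬(c.useArc i = true) ∧ d i = u) with hE1
  set E2 := Finset.univ.filter (fun i : ZMod n => ¬(c.useArc i = true) ∧ ¬(d i = u)) with hE2
  have hsplit1 : ∑ i ∈ Finset.univ.filter (fun i : ZMod n => c.useArc i = true), d i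
      = ∑ i ∈ P, d i + ∑ i ∈ Q, d i := by
    rw [hP, hQ, ← Finset.filter_filter, ← Finset.filter_filter]
    exact (Finset.sum_filter_add_sum_filter_not _ _ _).symm
  have hsplit2 : ∑ i ∈ Finset.univ.filter (fun i : ZMod n => ¬(c.useArc i = true)), d i
      = ∑ i ∈ E1, d i + ∑ i ∈ E2, d i := by
    rw [hE1, hE2, ← Finset.filter_filter, ← Finset.filter_filter]
    exact (Finset.sum_filter_add_sum_filter_not _ _ _).symm
  have htotal : ∑ i : ZMod n, d i
      = ∑ i ∈ P, d i + ∑ i ∈ Q, d i + (∑ i ∈ E1, d i + ∑ i ∈ E2, d i) := by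
    rw [← hsplit1, ← hsplit2, Finset.sum_filter_add_sum_filter_not]
  have hPsum : ∑ i ∈ P, d i = P.card • α := by
    rw [← Finset.sum_const]
    exact Finset.sum_congr rfl (fun i hi => (Finset.mem_filter.mp hi).2.2)
  have hQsum : ∑ i ∈ Q, d i = Q.card • β := by
    rw [← Finset.sum_const]
    refine Finset.sum_congr rfl (fun i hi => ?_)
    have h' := Finset.mem_filter.mp hi
    rcases hclassA i h'.2.1 with h'' | h''
    · exact absurd h'' h'.2.2
    · exact h''
  have hE1sum : ∑ i ∈ E1, d i = E1.card • u := by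
    rw [← Finset.sum_const]
    exact Finset.sum_congr rfl (fun i hi => (Finset.mem_filter.mp hi).2.2)
  have hE2sum : ∑ i ∈ E2, d i = E2.card • (-u) := by
    rw [← Finset.sum_const]
    refine Finset.sum_congr rfl (fun i hi => ?_)
    have h' := Finset.mem_filter.mp hi
    rcases hclassE i (Bool.not_eq_true _ ▸ h'.2.1) with h'' | h''
    · exact absurd h'' h'.2.2
    · exact h''
  -- cardinalities
  have hcard1 : P.card + Q.card = (Finset.univ.filter (fun i : ZMod n => c.useArc i = true)).card := by
    rw [hP, hQ, ← Finset.filter_filter, ← Finset.filter_filter]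
    exact Finset.card_filter_add_card_filter_not _
  have hcard2 : E1.card + E2.card
      = (Finset.univ.filter (fun i : ZMod n => ¬(c.useArc i = true))).card := by
    rw [hE1, hE2, ← Finset.filter_filter, ← Finset.filter_filter]
    exact Finset.card_filter_add_card_filter_not _
  have hcardtot : P.card + Q.card + (E1.card + E2.card) = n := by
    rw [hcard1, hcard2, Finset.card_filter_add_card_filter_not, Finset.card_univ,
      ZMod.card]
  rcases Nat.eq_zero_or_pos (P.card + Q.card) with hzero | hpos
  · -- all steps are edges; show d is constant
    have hallE : ∀ i : ZMod n, c.useArc i = false := by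
      intro i
      by_contra h
      have h' : c.useArc i = true := by
        cases hb : c.useArc i
        · exact absurd hb h
        · rfl
      rcases hclassA i h' with hh | hh
      · have : i ∈ P := Finset.mem_filter.mpr ⟨Finset.mem_univ _, h', hh⟩
        have := Finset.card_pos.mpr ⟨i, this⟩
        omega
      · rcases Classical.em (d i = α) with he | he
        · have : i ∈ P := Finset.mem_filter.mpr ⟨Finset.mem_univ _, h', he⟩
          have := Finset.card_pos.mpr ⟨i, this⟩
          omega
        · have : i ∈ Q := Finset.mem_filter.mpr ⟨Finset.mem_univ _, h', he⟩
          have := Finset.card_pos.mpr ⟨i, this⟩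
          omega
    have hkey : ∀ i : ZMod n, d (i + 1) = d i := by
      intro i
      have huse : (1 : ZMod n) ≠ 0 := by
        haveI : Fact (1 < n) := ⟨hn2⟩
        exact one_ne_zero
      rcases hclassE i (hallE i) with h1 | h1 <;> rcases hclassE (i + 1) (hallE (i + 1)) with h2 | h2
      · rw [h1, h2]
      · -- d i = u, d (i+1) = -u : reversal
        exfalso
        have h1' : c.vert (i + 1) - c.vert i = u := by rw [← hdspec i]; exact h1
        have h2' : c.vert (i + 1 + 1) - c.vert (i + 1) = -u := by
          rw [← hdspec (i + 1)]; exact h2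
        have e1 := sub_eq_iff_eq_add.mp h1'
        have e2 := sub_eq_iff_eq_add.mp h2'
        have hback : c.vert i = c.vert (i + 1 + 1) := by rw [e2, e1]; abel
        have := c.edge_once i (i + 1) (hallE i) (hallE (i + 1)) (Or.inr ⟨hback, rfl⟩)
        exact huse (left_eq_add.mp this)
      · exfalso
        have h1' : c.vert (i + 1) - c.vert i = -u := by rw [← hdspec i]; exact h1
        have h2' : c.vert (i + 1 + 1) - c.vert (i + 1) = u := by
          rw [← hdspec (i + 1)]; exact h2
        have e1 := sub_eq_iff_eq_add.mp h1'
        have e2 := sub_eq_iff_eq_add.mp h2'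
        have hback : c.vert i = c.vert (i + 1 + 1) := by rw [e2, e1]; abel
        have := c.edge_once i (i + 1) (hallE i) (hallE (i + 1)) (Or.inr ⟨hback, rfl⟩)
        exact huse (left_eq_add.mp this)
      · rw [h1, h2]
    have hconstN : ∀ k : ℕ, d ((k : ℕ) : ZMod n) = d 0 := by
      intro k
      induction k with
      | zero => simp
      | succ m ih =>
        have : (((m + 1 : ℕ)) : ZMod n) = ((m : ℕ) : ZMod n) + 1 := by push_cast; ring
        rw [this, hkey, ih]
    have hconst : ∀ i : ZMod n, d i = d 0 := by
      intro i
      have := hconstN i.val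
      rwa [ZMod.natCast_rightInverse i] at this
    have hsum2 : (n : ℕ) • d 0 = 0 := by
      rw [← hsum]
      rw [Finset.sum_congr rfl (fun i _ => hconst i), Finset.sum_const, Finset.card_univ,
        ZMod.card]
    have hd0 : d 0 = u ∨ d 0 = -u := hclassE 0 (hallE 0)
    have : (n : ℕ) • u = 0 := by
      rcases hd0 with h | h
      · rwa [h] at hsum2
      · rw [h] at hsum2
        rw [smul_neg, neg_eq_zero] at hsum2
        exact hsum2
    exact hord n (by omega) hlt this
  · -- at least one arc
    refine H1 P.card Q.card E1.card E2.card hpos (by omega) ?_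
    have : P.card • α + Q.card • β + (E1.card • u + E2.card • (-u)) = 0 := by
      rw [← hPsum, ← hQsum, ← hE1sum, ← hE2sum, ← htotal, hsum]
    rw [smul_neg] at this
    rw [sub_eq_add_neg, add_assoc]
    exact this

lemma even_case (a : ℕ) (ha : 3 ≤ a) :
    ∃ (V : Type) (_ : Fintype V) (G : MixedGraph V),
      Nat.card V = a * (3 * a) ∧ IsMixedRZG G 2 2 (2 * a) := by
  haveI : NeZero a := ⟨by omega⟩
  haveI : NeZero (3 * a) := ⟨by omega⟩
  set u : ZMod (3 * a) × ZMod a := (((1 : ℕ) : ZMod (3 * a)), ((0 : ℕ) : ZMod a)) with hu_def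
  set av : ZMod (3 * a) × ZMod a := (((1 : ℕ) : ZMod (3 * a)), ((1 : ℕ) : ZMod a)) with hav_def
  set bv : ZMod (3 * a) × ZMod a := (((2 : ℕ) : ZMod (3 * a)), ((1 : ℕ) : ZMod a)) with hbv_def
  have hu : u ≠ 0 := by
    intro h
    have h1 := congrArg Prod.fst h
    simp only [hu_def] at h1
    have h2 : ((1 : ℕ) : ZMod (3 * a)) = ((0 : ℕ) : ZMod (3 * a)) := by exact_mod_cast h1
    have := natCast_inj' (show (1 : ℕ) < 3 * a by omega) (show (0 : ℕ) < 3 * a by omega) h2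
    omega
  have hα : av ≠ 0 := by
    intro h
    have h1 := congrArg Prod.fst h
    simp only [hav_def] at h1
    have h2 : ((1 : ℕ) : ZMod (3 * a)) = ((0 : ℕ) : ZMod (3 * a)) := by exact_mod_cast h1
    have := natCast_inj' (show (1 : ℕ) < 3 * a by omega) (show (0 : ℕ) < 3 * a by omega) h2
    omega
  have hβ : bv ≠ 0 := by
    intro h
    have h1 := congrArg Prod.fst h
    simp only [hbv_def] at h1
    have h2 : ((2 : ℕ) : ZMod (3 * a)) = ((0 : ℕ) : ZMod (3 * a)) := by exact_mod_cast h1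
    have := natCast_inj' (show (2 : ℕ) < 3 * a by omega) (show (0 : ℕ) < 3 * a by omega) h2
    omega
  have h2u : u ≠ -u := by
    intro h
    have h1 : (1 : ZMod (3 * a)) = -1 := by
      have := congrArg Prod.fst h
      simpa [hu_def] using this
    have h2 : ((2 : ℕ) : ZMod (3 * a)) = ((0 : ℕ) : ZMod (3 * a)) := by
      push_cast
      linear_combination h1
    have := natCast_inj' (show (2 : ℕ) < 3 * a by omega) (show (0 : ℕ) < 3 * a by omega) h2
    omega
  have hαβ : av ≠ bv := by
    intro h
    have h1 := congrArg Prod.fst h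
    simp only [hav_def, hbv_def] at h1
    have := natCast_inj' (show (1 : ℕ) < 3 * a by omega) (show (2 : ℕ) < 3 * a by omega) h1
    omega
  refine ⟨ZMod (3 * a) × ZMod a, inferInstance, cayley u av bv hu hα hβ, ?_, ?_, ?_, ?_⟩
  · rw [Nat.card_prod, Nat.card_zmod, Nat.card_zmod, mul_comm]
  · intro v; exact cayley_edge_card u av bv hu hα hβ h2u v
  · intro v; exact cayley_arc_card u av bv hu hα hβ hαβ v
  constructor
  · -- existence of a (2a)-cycle
    refine mk_cycle (by omega)
      (fun i => if i < a then (((i : ℕ) : ZMod (3 * a)), ((i : ℕ) : ZMod a))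
        else (((2 * a - i : ℕ) : ZMod (3 * a)), ((0 : ℕ) : ZMod a)))
      (fun i => decide (i < a)) ?_ ?_ ?_ ?_
    · rw [if_neg (by omega), if_pos (by omega)]
      norm_num
    · intro i hi hui
      have hia : i < a := of_decide_eq_true hui
      left
      rcases Nat.lt_or_ge (i + 1) a with h | h
      · rw [if_pos hia, if_pos h, hav_def, Prod.mk_add_mk]
        push_cast
        rfl
      · have hia1 : i + 1 = a := by omega
        rw [if_pos hia, if_neg (by omega), hav_def, Prod.mk_add_mk]
        have h1 : ((2 * a - (i + 1) : ℕ) : ZMod (3 * a)) = ((i : ℕ) : ZMod (3 * a)) + 1 := by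
          have : (2 * a - (i + 1) : ℕ) = i + 1 := by omega
          rw [this]; push_cast; ring
        have h2 : ((0 : ℕ) : ZMod a) = ((i : ℕ) : ZMod a) + 1 := by
          have h3 : ((i + 1 : ℕ) : ZMod a) = 0 := by rw [hia1, ZMod.natCast_self]
          push_cast at h3
          push_cast
          exact h3.symm
        rw [h1, h2]
        push_cast
        rfl
    · intro i hi hui
      have hia : ¬ (i < a) := of_decide_eq_false hui
      right
      rw [if_neg hia, if_neg (by omega), hu_def, Prod.mk_add_mk]
      have h1 : ((2 * a - i : ℕ) : ZMod (3 * a)) = ((2 * a - (i + 1) : ℕ) : ZMod (3 * a)) + 1 := by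
        have : (2 * a - i : ℕ) = (2 * a - (i + 1)) + 1 := by omega
        rw [this]; push_cast; ring
      rw [h1]
      norm_num
    · intro i hi j hj hw
      rcases Nat.lt_or_ge i a with h1 | h1 <;> rcases Nat.lt_or_ge j a with h2 | h2
      · rw [if_pos h1, if_pos h2] at hw
        have := congrArg Prod.snd hw
        simp only at this
        exact natCast_inj' h1 h2 this
      · rw [if_pos h1, if_neg (by omega)] at hw
        have hs := congrArg Prod.snd hw
        have hf := congrArg Prod.fst hw
        simp only at hs hf
        have hi0 : i = 0 := natCast_inj' h1 (by omega) hs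
        subst hi0
        have := natCast_inj' (x := 0) (by omega) (show 2 * a - j < 3 * a by omega) hf
        omega
      · rw [if_neg (by omega), if_pos h2] at hw
        have hs := congrArg Prod.snd hw
        have hf := congrArg Prod.fst hw
        simp only at hs hf
        have hj0 : j = 0 := natCast_inj' h2 (by omega) hs.symm
        subst hj0
        have := natCast_inj' (x := 2 * a - i) (by omega) (by omega) hf
        omega
      · rw [if_neg (by omega), if_neg (by omega)] at hw
        have hf := congrArg Prod.fst hw
        simp only at hf
        have := natCast_inj' (x := 2 * a - i) (y := 2 * a - j) (by omega) (by omega) hf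
        omega
  · intro c
    refine girth_lb hu hα hβ h2u hαβ ?_ ?_ c
    · intro m hm1 hm2 hm0
      rw [hu_def, nsmul_pair] at hm0
      have hf := congrArg Prod.fst hm0
      simp only [Prod.fst_zero] at hf
      have hz : ((m : ℕ) : ZMod (3 * a)) = 0 := by
        rw [nsmul_eq_mul] at hf
        push_cast at hf
        push_cast
        linear_combination hf
      rw [ZMod.natCast_eq_zero_iff] at hz
      have := Nat.le_of_dvd (by omega) hz
      omega
    · intro p q e1 e2 hpq hlen heq
      rw [hu_def, hav_def, hbv_def, nsmul_pair, nsmul_pair, nsmul_pair, nsmul_pair] at heq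
      have hf := congrArg Prod.fst heq
      have hs := congrArg Prod.snd heq
      simp only [Prod.mk_add_mk, Prod.mk_sub_mk, Prod.fst_zero, Prod.snd_zero] at hf hs
      have hs' : ((p + q : ℕ) : ZMod a) = 0 := by
        simp only [nsmul_eq_mul] at hs
        push_cast at hs
        push_cast
        linear_combination hs
      rw [ZMod.natCast_eq_zero_iff] at hs'
      obtain ⟨k, hk⟩ := hs'
      have hpqa : p + q = a := by
        rcases k with _ | _ | k
        · omega
        · omega
        · exfalso
          have h2 : a * 2 ≤ a * (k + 1 + 1) := Nat.mul_le_mul_left a (by omega)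
          omega
      have hf' : ((p + 2 * q + e1 : ℕ) : ZMod (3 * a)) = ((e2 : ℕ) : ZMod (3 * a)) := by
        simp only [nsmul_eq_mul] at hf
        push_cast at hf
        push_cast
        linear_combination hf
      rw [ZMod.natCast_eq_natCast_iff] at hf'
      have hdvd := hf'.dvd
      have hz : ((3 * a : ℕ) : ℤ) ≤ (e2 : ℤ) - ((p : ℤ) + 2 * q + e1) ∨
          (e2 : ℤ) - ((p : ℤ) + 2 * q + e1) ≤ 0 - ((3 * a : ℕ) : ℤ) ∨
          (e2 : ℤ) = ((p : ℤ) + 2 * q + e1) := by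
        rcases lt_trichotomy ((e2 : ℤ) - ((p : ℤ) + 2 * q + e1)) 0 with h | h | h
        · right; left
          have h2 := Int.le_of_dvd (by omega) (dvd_neg.mpr hdvd)
          omega
        · right; right; omega
        · left; exact Int.le_of_dvd h hdvd
      push_cast at hz
      omega

lemma odd_case (a : ℕ) (ha : 3 ≤ a) :
    ∃ (V : Type) (_ : Fintype V) (G : MixedGraph V),
      Nat.card V = a * (3 * a - 2) ∧ IsMixedRZG G 2 2 (2 * a - 1) := by
  set n := a * (3 * a - 2) with hn
  have h7 : a * 7 ≤ n := by
    rw [hn]; exact Nat.mul_le_mul_left a (by omega)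
  haveI : NeZero n := ⟨by omega⟩
  have key : 3 * a * (a - 1) + a = n := by
    rw [hn]
    zify [show 1 ≤ a by omega, show 2 ≤ 3 * a by omega]
    ring
  set u : ZMod n := ((1 : ℕ) : ZMod n) with hu_def
  set av : ZMod n := ((3 * a - 1 : ℕ) : ZMod n) with hav_def
  set bv : ZMod n := ((3 * a : ℕ) : ZMod n) with hbv_def
  have hu : u ≠ 0 := by
    intro h
    have := natCast_inj' (show (1 : ℕ) < n by omega) (show (0 : ℕ) < n by omega)
      (by rw [← hu_def]; exact_mod_cast h)
    omega
  have hα : av ≠ 0 := by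
    intro h
    have := natCast_inj' (show (3 * a - 1 : ℕ) < n by omega) (show (0 : ℕ) < n by omega)
      (by rw [← hav_def]; exact_mod_cast h)
    omega
  have hβ : bv ≠ 0 := by
    intro h
    have := natCast_inj' (show (3 * a : ℕ) < n by omega) (show (0 : ℕ) < n by omega)
      (by rw [← hbv_def]; exact_mod_cast h)
    omega
  have h2u : u ≠ -u := by
    intro h
    have h2 : ((2 : ℕ) : ZMod n) = ((0 : ℕ) : ZMod n) := by
      push_cast
      rw [hu_def] at h
      push_cast at h
      linear_combination h
    have := natCast_inj' (show (2 : ℕ) < n by omega) (show (0 : ℕ) < n by omega) h2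
    omega
  have hαβ : av ≠ bv := by
    intro h
    rw [hav_def, hbv_def] at h
    have := natCast_inj' (show (3 * a - 1 : ℕ) < n by omega) (show (3 * a : ℕ) < n by omega) h
    omega
  refine ⟨ZMod n, inferInstance, cayley u av bv hu hα hβ, ?_, ?_, ?_, ?_⟩
  · rw [Nat.card_zmod]
  · intro v; exact cayley_edge_card u av bv hu hα hβ h2u v
  · intro v; exact cayley_arc_card u av bv hu hα hβ hαβ v
  constructor
  · -- existence of a (2a-1)-cycle
    refine mk_cycle (by omega)
      (fun i => if i < a then ((3 * a * i : ℕ) : ZMod n)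
        else ((n - a + (i - (a - 1)) : ℕ) : ZMod n))
      (fun i => decide (i < a - 1)) ?_ ?_ ?_ ?_
    · rw [if_neg (by omega), if_pos (by omega)]
      have h1 : (n - a + (2 * a - 1 - (a - 1)) : ℕ) = n := by omega
      have h2 : (3 * a * 0 : ℕ) = 0 := by ring
      rw [h1, h2, ZMod.natCast_self, Nat.cast_zero]
    · intro i hi hui
      have hia : i < a - 1 := of_decide_eq_true hui
      right
      rw [if_pos (by omega), if_pos (by omega), hbv_def]
      have h1 : (3 * a * (i + 1) : ℕ) = 3 * a * i + 3 * a := by ring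
      rw [h1, Nat.cast_add]
    · intro i hi hui
      have hia : ¬ (i < a - 1) := of_decide_eq_false hui
      left
      rcases Nat.lt_or_ge i a with h | h
      · -- i = a - 1, boundary step
        have hia1 : i = a - 1 := by omega
        rw [if_pos h, if_neg (by omega), hu_def]
        have h1 : (n - a + (i + 1 - (a - 1)) : ℕ) = 3 * a * (a - 1) + 1 := by omega
        rw [h1, hia1, Nat.cast_add, Nat.cast_one]
      · rw [if_neg (by omega), if_neg (by omega), hu_def]
        have h1 : (n - a + (i + 1 - (a - 1)) : ℕ) = (n - a + (i - (a - 1))) + 1 := by omega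
        rw [h1, Nat.cast_add, Nat.cast_one]
    · intro i hi j hj hw
      have hmul : ∀ m : ℕ, m ≤ a - 1 → 3 * a * m ≤ 3 * a * (a - 1) :=
        fun m hm => Nat.mul_le_mul_left _ hm
      rcases Nat.lt_or_ge i a with h1 | h1 <;> rcases Nat.lt_or_ge j a with h2 | h2
      · rw [if_pos h1, if_pos h2] at hw
        have hi' := hmul i (by omega)
        have hj' := hmul j (by omega)
        have := natCast_inj' (show 3 * a * i < n by omega) (show 3 * a * j < n by omega) hw
        exact Nat.eq_of_mul_eq_mul_left (by omega) this
      · rw [if_pos h1, if_neg (by omega)] at hw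
        have hi' := hmul i (by omega)
        have := natCast_inj' (show 3 * a * i < n by omega)
          (show n - a + (j - (a - 1)) < n by omega) hw
        omega
      · rw [if_neg (by omega), if_pos h2] at hw
        have hj' := hmul j (by omega)
        have := natCast_inj' (show n - a + (i - (a - 1)) < n by omega)
          (show 3 * a * j < n by omega) hw
        omega
      · rw [if_neg (by omega), if_neg (by omega)] at hw
        have := natCast_inj' (show n - a + (i - (a - 1)) < n by omega)
          (show n - a + (j - (a - 1)) < n by omega) hw
        omega
  · intro c
    refine girth_lb hu hα hβ h2u hαβ ?_ ?_ c
    · intro m hm1 hm2 hm0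
      rw [hu_def, nsmul_eq_mul] at hm0
      push_cast at hm0
      rw [mul_one] at hm0
      have hm0' : ((m : ℕ) : ZMod n) = 0 := by exact_mod_cast hm0
      rw [ZMod.natCast_eq_zero_iff] at hm0'
      have := Nat.le_of_dvd (by omega) hm0'
      omega
    · intro p q e1 e2 hpq hlen heq
      rw [hu_def, hav_def, hbv_def] at heq
      have hf' : ((p * (3 * a - 1) + q * (3 * a) + e1 : ℕ) : ZMod n) = ((e2 : ℕ) : ZMod n) := by
        simp only [nsmul_eq_mul] at heq
        push_cast [Nat.cast_sub (show 1 ≤ 3 * a by omega)] at heq ⊢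
        linear_combination heq
      rw [ZMod.natCast_eq_natCast_iff] at hf'
      have hdvd := hf'.dvd
      -- move to ℤ
      set A : ℤ := (a : ℤ) with hA_def
      have hA3 : 3 ≤ A := by rw [hA_def]; exact_mod_cast ha
      have hcast : ((p * (3 * a - 1) + q * (3 * a) + e1 : ℕ) : ℤ)
          = (p : ℤ) * (3 * A - 1) + (q : ℤ) * (3 * A) + (e1 : ℤ) := by
        push_cast [Nat.cast_sub (show 1 ≤ 3 * a by omega)]
        ring
      set z : ℤ := (p : ℤ) * (3 * A - 1) + (q : ℤ) * (3 * A) + (e1 : ℤ) - (e2 : ℤ) with hz_def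
      have hdvd' : (n : ℤ) ∣ z := by
        have h0 : (n : ℤ) ∣ ((e2 : ℕ) : ℤ) - ((p * (3 * a - 1) + q * (3 * a) + e1 : ℕ) : ℤ) :=
          hf'.dvd
        rw [hcast] at h0
        have := dvd_neg.mpr h0
        rw [hz_def]
        convert this using 1
        · rfl
        push_cast
        ring
      have hN : (n : ℤ) = A * (3 * A - 2) := by
        rw [hn]
        push_cast [Nat.cast_sub (show 2 ≤ 3 * a by omega)]
        ring
      have hpq' : 1 ≤ (p : ℤ) + (q : ℤ) := by exact_mod_cast hpq
      have hlen' : (p : ℤ) + (q : ℤ) + (e1 : ℤ) + (e2 : ℤ) ≤ 2 * A - 2 := by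
        have : (p + q + e1 + e2 : ℕ) ≤ 2 * a - 2 := by omega
        have h2 := (Nat.cast_le (α := ℤ)).mpr this
        push_cast at h2
        omega
      have hp0 : 0 ≤ (p : ℤ) := Int.natCast_nonneg p
      have hq0 : 0 ≤ (q : ℤ) := Int.natCast_nonneg q
      have he10 : 0 ≤ (e1 : ℤ) := Int.natCast_nonneg e1
      have he20 : 0 ≤ (e2 : ℤ) := Int.natCast_nonneg e2
      have hid : z = ((p : ℤ) + q) * (3 * A - 1) + q + e1 - e2 := by rw [hz_def]; ring
      have hX1 : (3 * A - 1) ≤ ((p : ℤ) + q) * (3 * A - 1) :=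
        le_mul_of_one_le_left (by linarith) hpq'
      have hz_pos : 0 < z := by linarith
      have hzN := Int.le_of_dvd hz_pos hdvd'
      have hX2 : ((p : ℤ) + q) * (3 * A - 1) ≤ (2 * A - 2) * (3 * A - 1) :=
        mul_le_mul_of_nonneg_right (by linarith) (by linarith)
      have hz_lt : z < 2 * (n : ℤ) := by
        rw [hN]
        nlinarith [hid, hX2]
      -- hence z = n
      obtain ⟨t, ht⟩ := hdvd'
      have hn_pos : (0 : ℤ) < (n : ℤ) := by
        exact_mod_cast (show 0 < n by omega)
      have ht1 : t = 1 := by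
        by_contra hne
        rcases lt_trichotomy t 1 with h | h | h
        · have : t ≤ 0 := by omega
          nlinarith
        · exact hne h
        · have : 2 ≤ t := by omega
          nlinarith
      rw [ht1, mul_one] at ht
      rw [hN] at ht
      -- final contradiction
      rcases le_or_gt ((p : ℤ) + q) (A - 1) with hc | hc
      · have hkey : (3 * A - 1) * 1 ≤ (3 * A - 1) * (A - ((p : ℤ) + q)) :=
          mul_le_mul_of_nonneg_left (by linarith) (by linarith)
        nlinarith [hid, ht, hkey]
      · have hkey : A * (3 * A - 1) ≤ ((p : ℤ) + q) * (3 * A - 1) :=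
          mul_le_mul_of_nonneg_right (by linarith) (by linarith)
        nlinarith [hid, ht, hkey]

/-- For every `g ≥ 5` there is a `(2,2,g)`-graph with `⌈g/2⌉ * ⌊3g/2⌋` vertices;
this number equals `3g^2/4` for even `g` and `(3g^2 + 2g - 1)/4` for odd `g`. -/
theorem f_2_2_g_upper (g : ℕ) (hg : 5 ≤ g) :
    (∃ (V : Type) (_ : Fintype V) (G : MixedGraph V),
      Nat.card V = (g + 1) / 2 * (3 * g / 2) ∧ IsMixedRZG G 2 2 g) ∧
    (Even g → (g + 1) / 2 * (3 * g / 2) = 3 * g ^ 2 / 4) ∧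
    (Odd g → (g + 1) / 2 * (3 * g / 2) = (3 * g ^ 2 + 2 * g - 1) / 4) := by
  refine ⟨?_, ?_, ?_⟩
  · rcases Nat.even_or_odd g with he | ho
    · obtain ⟨k, hk⟩ := he
      have hk3 : 3 ≤ k := by omega
      obtain ⟨V, hF, G, hcard, hrzg⟩ := even_case k hk3
      refine ⟨V, hF, G, ?_, ?_⟩
      · rw [hcard]
        have e1 : (g + 1) / 2 = k := by omega
        have e2 : 3 * g / 2 = 3 * k := by omega
        rw [e1, e2]
      · have : 2 * k = g := by omega
        rwa [this] at hrzg
    · obtain ⟨k, hk⟩ := ho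
      have hk2 : 2 ≤ k := by omega
      obtain ⟨V, hF, G, hcard, hrzg⟩ := odd_case (k + 1) (by omega)
      refine ⟨V, hF, G, ?_, ?_⟩
      · rw [hcard]
        have e1 : (g + 1) / 2 = k + 1 := by omega
        have e2 : 3 * g / 2 = 3 * (k + 1) - 2 := by omega
        rw [e1, e2]
      · have : 2 * (k + 1) - 1 = g := by omega
        rwa [this] at hrzg
  · intro he
    obtain ⟨k, hk⟩ := he
    have e1 : (g + 1) / 2 = k := by omega
    have e2 : 3 * g / 2 = 3 * k := by omega
    have e3 : 3 * g ^ 2 = 12 * (k * k) := by subst hk; ring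
    have e4 : k * (3 * k) = 3 * (k * k) := by ring
    rw [e1, e2, e3, e4]
    omega
  · intro ho
    obtain ⟨k, hk⟩ := ho
    have e1 : (g + 1) / 2 = k + 1 := by omega
    have e2 : 3 * g / 2 = 3 * k + 1 := by omega
    have e3 : 3 * g ^ 2 = 12 * (k * k) + 12 * k + 3 := by subst hk; ring
    have e4 : (k + 1) * (3 * k + 1) = 3 * (k * k) + 4 * k + 1 := by ring
    rw [e1, e2, e3, e4]
    omega
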